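/- Let n ∈ ℕ and let M be a real n×n matrix whose diagonal satisfies M_{C,C} = −Σ_{C'≠C} M_{C',C} for every C. For C ≠ C' define M⁺_{C,C'} := max(M_{C,C'}, 0), M⁻_{C,C'} := max(−M_{C,C'}, 0), and V_C := 2·Σ_{C'≠C} M⁻_{C',C}. Suppose p•, p∘ : ℝ → (Fin n → ℝ) are differentiable and satisfy, for every C and t, d/dt p•_C = Σ_{C'≠C}( M⁺_{C,C'} p•_{C'} − M⁺_{C',C} p•_C + M⁻_{C,C'} p∘_{C'} − M⁻_{C',C} p•_C ) + V_C p•_C, and the same equation with • and ∘ interchanged. Then p := p• − p∘ satisfies, for every C and t, d/dt p_C = Σ_{C'≠C}( M_{C,C'} p_{C'} − M_{C',C} p_C ), i.e. d/dt p = M p. -/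

import Mathlib

open Finset

/-- **The particle/antiparticle process reproduces the negative-rate master equation.**
Given a real `n×n` matrix `M` whose diagonal entries equal minus the corresponding
off-diagonal column sums, if `p•` and `p∘` solve the coupled particle/antiparticle
equations with the entirely positive rates `M⁺_{C,C'} = max(M_{C,C'},0)`,
`M⁻_{C,C'} = max(−M_{C,C'},0)` and branching rates `V_C = 2 Σ_{C'≠C} M⁻_{C',C}`, then
`p = p• − p∘` solves the original master equation `d/dt p = M p`. -/
theorem particle_antiparticle_reproduces_master_equation
    (n : ℕ) (M : Matrix (Fin n) (Fin n) ℝ)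
    (hdiag : ∀ C, M C C = -∑ C' ∈ univ.filter (· ≠ C), M C' C)
    (pb pw : ℝ → Fin n → ℝ)
    (hb : ∀ C t, HasDerivAt (fun u => pb u C)
      ((∑ C' ∈ univ.filter (· ≠ C),
        (max (M C C') 0 * pb t C' - max (M C' C) 0 * pb t C
          + max (-M C C') 0 * pw t C' - max (-M C' C) 0 * pb t C))
        + (2 * ∑ C' ∈ univ.filter (· ≠ C), max (-M C' C) 0) * pb t C) t)
    (hw : ∀ C t, HasDerivAt (fun u => pw u C)
      ((∑ C' ∈ univ.filter (· ≠ C),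
        (max (M C C') 0 * pw t C' - max (M C' C) 0 * pw t C
          + max (-M C C') 0 * pb t C' - max (-M C' C) 0 * pw t C))
        + (2 * ∑ C' ∈ univ.filter (· ≠ C), max (-M C' C) 0) * pw t C) t) :
    ∀ C t, HasDerivAt (fun u => pb u C - pw u C)
      (∑ C' ∈ univ.filter (· ≠ C),
        (M C C' * (pb t C' - pw t C') - M C' C * (pb t C - pw t C))) t := by
  intro C t
  have k : ∀ a : ℝ, max a 0 - max (-a) 0 = a := by
    intro a
    rcases le_total a 0 with h | h
    · simp [max_eq_right h, max_eq_left (by linarith : (0:ℝ) ≤ -a)]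
    · simp [max_eq_left h, max_eq_right (by linarith : -a ≤ 0)]
  have h := (hb C t).sub (hw C t)
  convert h using 1
  any_goals rfl
  rw [show ∀ a b c d : ℝ, (a + c) - (b + d) = (a - b) + (c - d) by intros; ring,
    ← mul_sub, ← Finset.sum_sub_distrib, mul_comm, Finset.mul_sum, Finset.mul_sum,
    ← Finset.sum_add_distrib]
  refine Finset.sum_congr rfl fun C' _ => ?_
  linear_combination (pw t C' - pb t C') * k (M C C') + (pb t C - pw t C) * k (M C' C)
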